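/- (Theorem 2, bias formula) Under the sub-population Bernoulli design with in-experiment probability p and treatment probability π, the bias of τ̂(p,π) = τ̂¹(p,π) + τ̂²(p,π) for the total treatment effect τ is E[τ̂(p,π) − τ] = −((1 − 2pπ)/n) Σ_{i ≠ j} ζ_{i,j}. -/

import Mathlib

open Finset

noncomputable section

/-- Real-valued indicator of a Boolean. -/
def ind (b : Bool) : ℝ := if b then 1 else 0

/-- Dyadic linear potential-outcome model for an ordered pair `(i, j)`:
`z_{i,j}(W) = α_{i,j} + β_{i,j} W_i + γ_{i,j} W_j + ζ_{i,j} W_i W_j`. -/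
def zDyad {n : ℕ} (α β γ ζ : Fin n → Fin n → ℝ) (W : Fin n → ℝ) (i j : Fin n) : ℝ :=
  α i j + β i j * W i + γ i j * W j + ζ i j * W i * W j

/-- Upstream-aggregated outcome `Y_j(W) = Σ_{i ≠ j} z_{i,j}(W)`. -/
def Yagg {n : ℕ} (α β γ ζ : Fin n → Fin n → ℝ) (W : Fin n → ℝ) (j : Fin n) : ℝ :=
  ∑ i ∈ ({j}ᶜ : Finset (Fin n)), zDyad α β γ ζ W i j

/-- Downstream-aggregated outcome (diffusion metric) `D_j(W) = Σ_{i ≠ j} z_{j,i}(W)`. -/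
def Dagg {n : ℕ} (α β γ ζ : Fin n → Fin n → ℝ) (W : Fin n → ℝ) (j : Fin n) : ℝ :=
  ∑ i ∈ ({j}ᶜ : Finset (Fin n)), zDyad α β γ ζ W j i

/-- Expectation over the sub-population design: `v ∈ {0,1}^n` are i.i.d. Bernoulli(`p`)
in-experiment indicators, `u ∈ {0,1}^n` are i.i.d. Bernoulli(`q`) treatment coins, all
`2n` variables mutually independent. -/
def expectVU (n : ℕ) (p q : ℝ) (f : (Fin n → Bool) → (Fin n → Bool) → ℝ) : ℝ :=
  ∑ v : Fin n → Bool, ∑ u : Fin n → Bool,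
    (∏ i, if v i then p else 1 - p) * (∏ i, if u i then q else 1 - q) * f v u

/-- Realized treatment in the sub-population design: `W_i = V_i U_i`
(units outside the experiment receive control). -/
def treatVU {n : ℕ} (v u : Fin n → Bool) : Fin n → ℝ :=
  fun i => ind (v i && u i)

/-- Horvitz–Thompson estimator built from `Y` in the sub-population design:
`τ̂¹(p,q)(v,u) = (1/n) Σ_i [V_i W_i Y_i(W)/(pq) − V_i (1 − W_i) Y_i(W)/(p(1 − q))]`. -/
def tauHat1Sub {n : ℕ} (α β γ ζ : Fin n → Fin n → ℝ) (p q : ℝ)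
    (v u : Fin n → Bool) : ℝ :=
  (1 / (n : ℝ)) * ∑ i,
    (ind (v i) * treatVU v u i * Yagg α β γ ζ (treatVU v u) i / (p * q) -
      ind (v i) * (1 - treatVU v u i) * Yagg α β γ ζ (treatVU v u) i / (p * (1 - q)))

/-- Horvitz–Thompson estimator built from `D` in the sub-population design. -/
def tauHat2Sub {n : ℕ} (α β γ ζ : Fin n → Fin n → ℝ) (p q : ℝ)
    (v u : Fin n → Bool) : ℝ :=
  (1 / (n : ℝ)) * ∑ i,
    (ind (v i) * treatVU v u i * Dagg α β γ ζ (treatVU v u) i / (p * q) -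
      ind (v i) * (1 - treatVU v u i) * Dagg α β γ ζ (treatVU v u) i / (p * (1 - q)))

lemma bias_sum_pi_prod {n : ℕ} (F : Fin n → Bool → ℝ) :
    ∑ v : Fin n → Bool, ∏ i, F i (v i) = ∏ i, ∑ b : Bool, F i b := by
  rw [Finset.prod_univ_sum, ← Fintype.piFinset_univ]

lemma bias_expectVU_prod {n : ℕ} (p q : ℝ) (f : Fin n → Bool → Bool → ℝ) :
    expectVU n p q (fun v u => ∏ i, f i (v i) (u i)) =
      ∏ i, (p * q * f i true true + p * (1 - q) * f i true false +
        (1 - p) * q * f i false true + (1 - p) * (1 - q) * f i false false) := by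
  unfold expectVU
  have h1 : ∀ v u : Fin n → Bool,
      (∏ i, if v i then p else 1 - p) * (∏ i, if u i then q else 1 - q) *
        ∏ i, f i (v i) (u i) =
      ∏ i, ((if v i then p else 1 - p) * ((if u i then q else 1 - q) * f i (v i) (u i))) := by
    intro v u
    rw [Finset.prod_mul_distrib, Finset.prod_mul_distrib, mul_assoc]
  simp only [h1]
  have h2 : ∀ v : Fin n → Bool,
      ∑ u : Fin n → Bool, ∏ i, ((if v i then p else 1 - p) *
        ((if u i then q else 1 - q) * f i (v i) (u i))) =
      ∏ i, ((if v i then p else 1 - p) *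
        (q * f i (v i) true + (1 - q) * f i (v i) false)) := by
    intro v
    rw [bias_sum_pi_prod (fun i b => (if v i then p else 1 - p) * ((if b then q else 1 - q) * f i (v i) b))]
    exact Finset.prod_congr rfl (fun i _ => by cases h : v i <;> simp [h, Fintype.sum_bool] <;> ring)
  simp only [h2]
  rw [bias_sum_pi_prod (fun i a => (if a then p else 1 - p) * (q * f i a true + (1 - q) * f i a false))]
  exact Finset.prod_congr rfl (fun i _ => by simp [Fintype.sum_bool]; ring)

lemma bias_expectVU_two {n : ℕ} (p q : ℝ) (i j : Fin n) (hij : i ≠ j)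
    (g h : Bool → Bool → ℝ) :
    expectVU n p q (fun v u => g (v i) (u i) * h (v j) (u j)) =
      (p * q * g true true + p * (1 - q) * g true false +
        (1 - p) * q * g false true + (1 - p) * (1 - q) * g false false) *
      (p * q * h true true + p * (1 - q) * h true false +
        (1 - p) * q * h false true + (1 - p) * (1 - q) * h false false) := by
  set f : Fin n → Bool → Bool → ℝ :=
    fun k => if k = i then g else if k = j then h else fun _ _ => 1 with hf
  have h1 : ∀ v u : Fin n → Bool, g (v i) (u i) * h (v j) (u j) = ∏ k, f k (v k) (u k) := by
    intro v u
    have hsub : ∏ k, f k (v k) (u k) = ∏ k ∈ ({i, j} : Finset (Fin n)), f k (v k) (u k) := by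
      refine (Finset.prod_subset (Finset.subset_univ _) ?_).symm
      intro x _ hx
      simp only [Finset.mem_insert, Finset.mem_singleton, not_or] at hx
      simp [hf, hx.1, hx.2]
    rw [hsub, Finset.prod_pair hij]
    simp [hf, hij, Ne.symm hij]
  simp only [h1]
  rw [bias_expectVU_prod]
  have hsub : ∏ k, (p * q * f k true true + p * (1 - q) * f k true false +
      (1 - p) * q * f k false true + (1 - p) * (1 - q) * f k false false) =
      ∏ k ∈ ({i, j} : Finset (Fin n)), (p * q * f k true true + p * (1 - q) * f k true false +
      (1 - p) * q * f k false true + (1 - p) * (1 - q) * f k false false) := by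
    refine (Finset.prod_subset (Finset.subset_univ _) ?_).symm
    intro x _ hx
    simp only [Finset.mem_insert, Finset.mem_singleton, not_or] at hx
    simp [hf, hx.1, hx.2]; ring
  rw [hsub, Finset.prod_pair hij]
  simp [hf, hij, Ne.symm hij]

lemma bias_expectVU_sum {n : ℕ} (p q : ℝ) {ι : Type*} (s : Finset ι)
    (f : ι → (Fin n → Bool) → (Fin n → Bool) → ℝ) :
    expectVU n p q (fun v u => ∑ x ∈ s, f x v u) = ∑ x ∈ s, expectVU n p q (f x) := by
  unfold expectVU
  simp only [Finset.mul_sum]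
  rw [show (∑ v : Fin n → Bool, ∑ u : Fin n → Bool, ∑ x ∈ s,
      (∏ i, if v i then p else 1 - p) * (∏ i, if u i then q else 1 - q) * f x v u)
      = ∑ v : Fin n → Bool, ∑ x ∈ s, ∑ u : Fin n → Bool,
      (∏ i, if v i then p else 1 - p) * (∏ i, if u i then q else 1 - q) * f x v u
      from Finset.sum_congr rfl fun v _ => Finset.sum_comm]
  exact Finset.sum_comm

lemma bias_expectVU_add {n : ℕ} (p q : ℝ) (f g : (Fin n → Bool) → (Fin n → Bool) → ℝ) :
    expectVU n p q (fun v u => f v u + g v u) = expectVU n p q f + expectVU n p q g := by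
  unfold expectVU
  rw [← Finset.sum_add_distrib]
  exact Finset.sum_congr rfl fun v _ => by
    rw [← Finset.sum_add_distrib]
    exact Finset.sum_congr rfl fun u _ => by ring

lemma bias_expectVU_const_mul {n : ℕ} (p q c : ℝ) (f : (Fin n → Bool) → (Fin n → Bool) → ℝ) :
    expectVU n p q (fun v u => c * f v u) = c * expectVU n p q f := by
  unfold expectVU
  rw [Finset.mul_sum]
  exact Finset.sum_congr rfl fun v _ => by
    rw [Finset.mul_sum]
    exact Finset.sum_congr rfl fun u _ => by ring

def dI (s t : Bool) : ℝ := if s = t then 1 else 0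

lemma bias_expectVU_pair {n : ℕ} (p q : ℝ) (i j : Fin n) (hij : i ≠ j)
    (F : Bool → Bool → Bool → Bool → ℝ) :
    expectVU n p q (fun v u => F (v i) (u i) (v j) (u j)) =
      ∑ a : Bool, ∑ b : Bool, ∑ c : Bool, ∑ d : Bool,
        (if a then p else 1 - p) * (if b then q else 1 - q) *
          ((if c then p else 1 - p) * (if d then q else 1 - q)) * F a b c d := by
  have hdec : ∀ v u : Fin n → Bool, F (v i) (u i) (v j) (u j) =
      ∑ a : Bool, ∑ b : Bool, ∑ c : Bool, ∑ d : Bool,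
        (dI (v i) a * dI (u i) b * F a b c d) * (dI (v j) c * dI (u j) d) := by
    intro v u
    cases hvi : v i <;> cases hui : u i <;> cases hvj : v j <;> cases huj : u j <;>
      simp [dI, Fintype.sum_bool]
  simp only [hdec]
  rw [bias_expectVU_sum]
  refine Finset.sum_congr rfl fun a _ => ?_
  rw [bias_expectVU_sum]
  refine Finset.sum_congr rfl fun b _ => ?_
  rw [bias_expectVU_sum]
  refine Finset.sum_congr rfl fun c _ => ?_
  rw [bias_expectVU_sum]
  refine Finset.sum_congr rfl fun d _ => ?_
  rw [bias_expectVU_two p q i j hij (fun s t => dI s a * dI t b * F a b c d)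
    (fun s t => dI s c * dI t d)]
  cases a <;> cases b <;> cases c <;> cases d <;> simp [dI] <;> ring


lemma bias_pair1 {n : ℕ} (α β γ ζ : Fin n → Fin n → ℝ) (p q : ℝ)
    (hp0 : 0 < p) (hq0 : 0 < q) (hq1 : q < 1) (i k : Fin n) (hik : i ≠ k) :
    expectVU n p q (fun v u =>
      ind (v i) * treatVU v u i * zDyad α β γ ζ (treatVU v u) k i / (p * q) -
      ind (v i) * (1 - treatVU v u i) * zDyad α β γ ζ (treatVU v u) k i / (p * (1 - q)))
      = γ k i + p * q * ζ k i := by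
  have hfun : (fun v u : Fin n → Bool =>
      ind (v i) * treatVU v u i * zDyad α β γ ζ (treatVU v u) k i / (p * q) -
      ind (v i) * (1 - treatVU v u i) * zDyad α β γ ζ (treatVU v u) k i / (p * (1 - q)))
      = fun v u => (fun a b c d =>
        ind a * ind (a && b) *
          (α k i + β k i * ind (c && d) + γ k i * ind (a && b) +
            ζ k i * ind (c && d) * ind (a && b)) / (p * q) -
        ind a * (1 - ind (a && b)) *
          (α k i + β k i * ind (c && d) + γ k i * ind (a && b) +
            ζ k i * ind (c && d) * ind (a && b)) / (p * (1 - q)))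
        (v i) (u i) (v k) (u k) := by
    funext v u
    simp only [treatVU, zDyad]
  rw [hfun, bias_expectVU_pair p q i k hik (fun a b c d =>
        ind a * ind (a && b) *
          (α k i + β k i * ind (c && d) + γ k i * ind (a && b) +
            ζ k i * ind (c && d) * ind (a && b)) / (p * q) -
        ind a * (1 - ind (a && b)) *
          (α k i + β k i * ind (c && d) + γ k i * ind (a && b) +
            ζ k i * ind (c && d) * ind (a && b)) / (p * (1 - q)))]
  have hp : p ≠ 0 := ne_of_gt hp0
  have hq : q ≠ 0 := ne_of_gt hq0
  have h1q : (1 : ℝ) - q ≠ 0 := by linarith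
  simp only [Fintype.sum_bool, ind, Bool.and_self, Bool.and_true, Bool.and_false,
    Bool.true_and, Bool.false_and, Bool.false_eq_true, if_true, if_false]
  field_simp
  ring

lemma bias_pair2 {n : ℕ} (α β γ ζ : Fin n → Fin n → ℝ) (p q : ℝ)
    (hp0 : 0 < p) (hq0 : 0 < q) (hq1 : q < 1) (i k : Fin n) (hik : i ≠ k) :
    expectVU n p q (fun v u =>
      ind (v i) * treatVU v u i * zDyad α β γ ζ (treatVU v u) i k / (p * q) -
      ind (v i) * (1 - treatVU v u i) * zDyad α β γ ζ (treatVU v u) i k / (p * (1 - q)))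
      = β i k + p * q * ζ i k := by
  have hfun : (fun v u : Fin n → Bool =>
      ind (v i) * treatVU v u i * zDyad α β γ ζ (treatVU v u) i k / (p * q) -
      ind (v i) * (1 - treatVU v u i) * zDyad α β γ ζ (treatVU v u) i k / (p * (1 - q)))
      = fun v u => (fun a b c d =>
        ind a * ind (a && b) *
          (α i k + β i k * ind (a && b) + γ i k * ind (c && d) +
            ζ i k * ind (a && b) * ind (c && d)) / (p * q) -
        ind a * (1 - ind (a && b)) *
          (α i k + β i k * ind (a && b) + γ i k * ind (c && d) +
            ζ i k * ind (a && b) * ind (c && d)) / (p * (1 - q)))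
        (v i) (u i) (v k) (u k) := by
    funext v u
    simp only [treatVU, zDyad]
  rw [hfun, bias_expectVU_pair p q i k hik (fun a b c d =>
        ind a * ind (a && b) *
          (α i k + β i k * ind (a && b) + γ i k * ind (c && d) +
            ζ i k * ind (a && b) * ind (c && d)) / (p * q) -
        ind a * (1 - ind (a && b)) *
          (α i k + β i k * ind (a && b) + γ i k * ind (c && d) +
            ζ i k * ind (a && b) * ind (c && d)) / (p * (1 - q)))]
  have hp : p ≠ 0 := ne_of_gt hp0
  have hq : q ≠ 0 := ne_of_gt hq0
  have h1q : (1 : ℝ) - q ≠ 0 := by linarith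
  simp only [Fintype.sum_bool, ind, Bool.and_self, Bool.and_true, Bool.and_false,
    Bool.true_and, Bool.false_and, Bool.false_eq_true, if_true, if_false]
  field_simp
  ring


/-- Theorem 2, bias formula: Under the sub-population Bernoulli design
with in-experiment probability `p` and treatment probability `q`, the bias of the
combined estimator `τ̂(p,q) = τ̂¹(p,q) + τ̂²(p,q)` for the total treatment effect
`τ = (1/n) Σ_j (Y_j(1) − Y_j(0))` is
`E[τ̂(p,q) − τ] = −((1 − 2pq)/n) Σ_{i ≠ j} ζ_{i,j}`. -/
theorem bias_tauHatSub_combined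
    (n : ℕ) (hn : 1 ≤ n) (α β γ ζ : Fin n → Fin n → ℝ)
    (p q : ℝ) (hp0 : 0 < p) (hp1 : p ≤ 1) (hq0 : 0 < q) (hq1 : q < 1) :
    expectVU n p q (fun v u => tauHat1Sub α β γ ζ p q v u + tauHat2Sub α β γ ζ p q v u) -
        (1 / (n : ℝ)) *
          ∑ j, (Yagg α β γ ζ (fun _ => (1 : ℝ)) j - Yagg α β γ ζ (fun _ => (0 : ℝ)) j) =
      -((1 - 2 * p * q) / (n : ℝ)) * ∑ j, ∑ i ∈ ({j}ᶜ : Finset (Fin n)), ζ i j := by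
  have hik : ∀ i k : Fin n, k ∈ ({i}ᶜ : Finset (Fin n)) → i ≠ k := by
    intro i k hk
    simp only [Finset.mem_compl, Finset.mem_singleton] at hk
    exact Ne.symm hk
  -- Step 1: rewrite the integrand as a double sum over ordered pairs
  have hfun : (fun v u => tauHat1Sub α β γ ζ p q v u + tauHat2Sub α β γ ζ p q v u)
      = fun v u : Fin n → Bool => (1 / (n : ℝ)) * ∑ i, ∑ k ∈ ({i}ᶜ : Finset (Fin n)),
          ((ind (v i) * treatVU v u i * zDyad α β γ ζ (treatVU v u) k i / (p * q) -
            ind (v i) * (1 - treatVU v u i) * zDyad α β γ ζ (treatVU v u) k i / (p * (1 - q))) +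
           (ind (v i) * treatVU v u i * zDyad α β γ ζ (treatVU v u) i k / (p * q) -
            ind (v i) * (1 - treatVU v u i) * zDyad α β γ ζ (treatVU v u) i k / (p * (1 - q)))) := by
    funext v u
    simp only [tauHat1Sub, tauHat2Sub, Yagg, Dagg, ← mul_add, ← Finset.sum_add_distrib]
    congr 1
    refine Finset.sum_congr rfl fun i _ => ?_
    simp only [Finset.mul_sum, Finset.sum_div, Finset.sum_add_distrib, Finset.sum_sub_distrib]
  -- Step 2: compute the expectation
  have hE : expectVU n p q
        (fun v u => tauHat1Sub α β γ ζ p q v u + tauHat2Sub α β γ ζ p q v u)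
      = (1 / (n : ℝ)) * ∑ i, ∑ k ∈ ({i}ᶜ : Finset (Fin n)),
          ((γ k i + p * q * ζ k i) + (β i k + p * q * ζ i k)) := by
    rw [hfun, bias_expectVU_const_mul]
    congr 1
    rw [bias_expectVU_sum]
    refine Finset.sum_congr rfl fun i _ => ?_
    rw [bias_expectVU_sum]
    refine Finset.sum_congr rfl fun k hk => ?_
    rw [bias_expectVU_add, bias_pair1 α β γ ζ p q hp0 hq0 hq1 i k (hik i k hk),
      bias_pair2 α β γ ζ p q hp0 hq0 hq1 i k (hik i k hk)]
  rw [hE]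
  -- Step 3: the total effect
  have htau : ∑ j, (Yagg α β γ ζ (fun _ => (1 : ℝ)) j - Yagg α β γ ζ (fun _ => (0 : ℝ)) j)
      = ∑ j, ∑ k ∈ ({j}ᶜ : Finset (Fin n)), (β k j + γ k j + ζ k j) := by
    refine Finset.sum_congr rfl fun j _ => ?_
    rw [Yagg, Yagg, ← Finset.sum_sub_distrib]
    refine Finset.sum_congr rfl fun k _ => ?_
    simp only [zDyad]
    ring
  rw [htau]
  -- Step 4: split and swap
  have hsplit : ∑ i, ∑ k ∈ ({i}ᶜ : Finset (Fin n)),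
        ((γ k i + p * q * ζ k i) + (β i k + p * q * ζ i k))
      = (∑ i, ∑ k ∈ ({i}ᶜ : Finset (Fin n)), (γ k i + p * q * ζ k i)) +
        ∑ i, ∑ k ∈ ({i}ᶜ : Finset (Fin n)), (β i k + p * q * ζ i k) := by
    rw [← Finset.sum_add_distrib]
    exact Finset.sum_congr rfl fun i _ => Finset.sum_add_distrib
  have hswap : ∑ i, ∑ k ∈ ({i}ᶜ : Finset (Fin n)), (β i k + p * q * ζ i k)
      = ∑ k, ∑ i ∈ ({k}ᶜ : Finset (Fin n)), (β i k + p * q * ζ i k) := by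
    have hc : ∀ i : Fin n, ({i}ᶜ : Finset (Fin n)) = Finset.univ.filter (fun k => k ≠ i) := by
      intro i; ext k; simp
    simp only [hc, Finset.sum_filter]
    rw [Finset.sum_comm]
    refine Finset.sum_congr rfl fun k _ => Finset.sum_congr rfl fun i _ => ?_
    rcases eq_or_ne i k with h | h
    · subst h; simp
    · simp [h, Ne.symm h]
  rw [hsplit, hswap]
  -- Step 5: final algebra
  have key : (∑ j, ∑ i ∈ ({j}ᶜ : Finset (Fin n)), (γ i j + p * q * ζ i j)) +
        (∑ j, ∑ i ∈ ({j}ᶜ : Finset (Fin n)), (β i j + p * q * ζ i j)) -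
        (∑ j, ∑ i ∈ ({j}ᶜ : Finset (Fin n)), (β i j + γ i j + ζ i j))
      = (2 * p * q - 1) * ∑ j, ∑ i ∈ ({j}ᶜ : Finset (Fin n)), ζ i j := by
    rw [Finset.mul_sum, ← Finset.sum_add_distrib, ← Finset.sum_sub_distrib]
    refine Finset.sum_congr rfl fun j _ => ?_
    rw [Finset.mul_sum, ← Finset.sum_add_distrib, ← Finset.sum_sub_distrib]
    refine Finset.sum_congr rfl fun i _ => ?_
    ring
  linear_combination (1 / (n : ℝ)) * key
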